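/- Let T be a p-string with unique smallest end-marker, w a p-string with e = |w|_p distinct p-symbols, and c ∈ Σp a p-symbol not occurring in w. Then LF_T(p) lies in the cw-interval if and only if p lies in the w-interval and L_T[p] > e. In particular, the width of the cw-interval equals the number of positions p in the w-interval with L_T[p] > e. -/

import Mathlib

/-- Symbols of a parameterized string: static symbols `s a` (from Σs) and
parameter symbols `p a` (from Σp). -/
inductive PSym where
  | s : ℕ → PSym
  | p : ℕ → PSym
deriving DecidableEq

/-- Symbols of a p-encoded string: static symbols, finite distances, and ∞. -/
inductive Enc where
  | s : ℕ → Enc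
  | fin : ℕ → Enc
  | inf : Enc
deriving DecidableEq

/-- Order embedding: static symbols < natural numbers < ∞. -/
def Enc.toPair : Enc → ℕ ×ₗ ℕ
  | .s a => toLex (0, a)
  | .fin d => toLex (1, d)
  | .inf => toLex (2, 0)

instance : LinearOrder Enc :=
  LinearOrder.lift' Enc.toPair (by
    rintro (a | a | _) (b | b | _) h <;>
      simp_all [Enc.toPair, toLex_inj, Prod.ext_iff])

/-- Largest position `j < i` (0-based) carrying the same symbol as position `i`. -/
def prevOcc (w : List PSym) (i : ℕ) : Option ℕ :=
  ((List.range i).filter (fun j => w[j]? = w[i]?)).max?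

/-- The p-encoding of position `i` (0-based) of `w`. -/
def pencSym (w : List PSym) (i : ℕ) : Enc :=
  match w[i]? with
  | some (PSym.s a) => Enc.s a
  | some (PSym.p _) =>
    match prevOcc w i with
    | some j => Enc.fin (i - j)
    | none => Enc.inf
  | none => Enc.inf

/-- The p-encoding ⟨w⟩ of a p-string `w`. -/
def penc (w : List PSym) : List Enc :=
  (List.range w.length).map (pencSym w)

/-- Lexicographic (strict) order on p-encoded strings. -/
def lexLt (x y : List Enc) : Prop := List.Lex (· < ·) x y

def lexLe (x y : List Enc) : Prop := lexLt x y ∨ x = y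

/-- Length of the longest common prefix. -/
def lcp {α : Type*} [DecidableEq α] : List α → List α → ℕ
  | a :: x, b :: y => if a = b then lcp x y + 1 else 0
  | _, _ => 0

/-- Number of ∞'s in the longest common prefix of two p-encoded strings. -/
def lcpInf (x y : List Enc) : ℕ := (x.take (lcp x y)).count Enc.inf

/-- Number of distinct p-symbols occurring in `w` (denoted |w|_p). -/
def distinctP (w : List PSym) : ℕ :=
  (w.filterMap (fun s => match s with | PSym.p a => some a | PSym.s _ => none)).dedup.length

/-- For `w` starting with a p-symbol: the rank of `w[1]` among the distinct
p-symbols of `w[1..h+1]`, where `h+1 = min{|w|, second occurrence of w[1] in w}`. -/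
def fceRank (w : List PSym) : ℕ :=
  match w with
  | [] => 0
  | c :: rest => distinctP ((c :: rest).take (min (c :: rest).length (2 + rest.idxOf c)))

/-- The function fce from the paper; `fce ε = $` is modelled as `Enc.s 0`. -/
def fce (w : List PSym) : Enc :=
  match w with
  | [] => Enc.s 0
  | PSym.s a :: _ => Enc.s a
  | w => Enc.fin (fceRank w)

namespace Scratch
lemma enc_lt (x y : Enc) : x < y ↔ x.toPair < y.toPair := Iff.rfl

lemma fin_lt_fin (d e : ℕ) : Enc.fin d < Enc.fin e ↔ d < e := by
  rw [enc_lt]; simp [Enc.toPair, Prod.Lex.lt_iff]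

lemma not_fin_lt_s (d b : ℕ) : ¬ (Enc.fin d < Enc.s b) := by
  rw [enc_lt]; simp [Enc.toPair, Prod.Lex.lt_iff]

lemma prevOcc_none (w : List PSym) (i : ℕ) : prevOcc w i = none ↔ ∀ j < i, w[j]? ≠ w[i]? := by
  rw [prevOcc, List.max?_eq_none_iff, List.filter_eq_nil_iff]
  simp [List.mem_range]

lemma prevOcc_some (w : List PSym) (i j : ℕ) : prevOcc w i = some j ↔
    (j < i ∧ w[j]? = w[i]?) ∧ ∀ k < i, w[k]? = w[i]? → k ≤ j := by
  rw [prevOcc, List.max?_eq_some_iff']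
  simp only [List.mem_filter, List.mem_range, decide_eq_true_eq]
  tauto


lemma penc_length (w : List PSym) : (penc w).length = w.length := by
  simp [penc]

lemma penc_getElem (w : List PSym) (i : ℕ) (h : i < w.length) :
    (penc w)[i]'(by simpa [penc_length]) = pencSym w i := by
  simp [penc]

lemma penc_getElem? (w : List PSym) (i : ℕ) (h : i < w.length) :
    (penc w)[i]? = some (pencSym w i) := by
  rw [List.getElem?_eq_getElem (by simpa [penc_length] using h)]
  simp [penc]

-- shift lemmas
lemma prevOcc_cons_some {u : List PSym} {i j : ℕ} (c : PSym) (h : prevOcc u i = some j) :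
    prevOcc (c :: u) (i+1) = some (j+1) := by
  rw [prevOcc_some] at h ⊢
  obtain ⟨⟨hj, he⟩, hmax⟩ := h
  refine ⟨⟨by omega, by simpa using he⟩, ?_⟩
  rintro (_ | k) hk he'
  · omega
  · simp only [List.getElem?_cons_succ] at he'
    have := hmax k (by omega) he'
    omega

lemma prevOcc_cons_none {u : List PSym} {i : ℕ} {c : PSym} (h : prevOcc u i = none)
    (hne : some c ≠ u[i]?) : prevOcc (c :: u) (i+1) = none := by
  rw [prevOcc_none] at h ⊢
  rintro (_ | k) hk
  · simpa using hne
  · simp only [List.getElem?_cons_succ]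
    exact h k (by omega)

lemma prevOcc_cons_zero {u : List PSym} {i : ℕ} {c : PSym} (h : prevOcc u i = none)
    (heq : some c = u[i]?) : prevOcc (c :: u) (i+1) = some 0 := by
  rw [prevOcc_none] at h
  rw [prevOcc_some]
  refine ⟨⟨by omega, by simpa using heq⟩, ?_⟩
  rintro (_ | k) hk he'
  · omega
  · simp only [List.getElem?_cons_succ] at he'
    exact absurd he' (h k (by omega))

lemma pencSym_cons_shift {u : List PSym} {i : ℕ} (c : PSym)
    (h : u[i]? ≠ some c ∨ prevOcc u i ≠ none) :
    pencSym (c :: u) (i+1) = pencSym u i := by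
  unfold pencSym
  rw [List.getElem?_cons_succ]
  match hu : u[i]?, hp : prevOcc u i with
  | none, _ => rfl
  | some (PSym.s a), _ => rfl
  | some (PSym.p b), some j =>
      rw [prevOcc_cons_some c hp]
      simp [Nat.succ_sub_succ]
  | some (PSym.p b), none =>
      rw [prevOcc_cons_none hp (by rw [hu]; rcases h with h | h; exact fun hc => h (hu.trans hc.symm); exact absurd hp h)]

lemma pencSym_cons_static (a : ℕ) (u : List PSym) (i : ℕ) :
    pencSym (PSym.s a :: u) (i+1) = pencSym u i := by
  match hu : u[i]?, hp : prevOcc u i with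
  | none, _ => apply pencSym_cons_shift; left; simp [hu]
  | some (PSym.s b), _ => unfold pencSym; rw [List.getElem?_cons_succ, hu]
  | some (PSym.p b), some j => apply pencSym_cons_shift; right; simp [hp]
  | some (PSym.p b), none => apply pencSym_cons_shift; left; simp [hu]

lemma pencSym_cons_first {u : List PSym} {i : ℕ} {b : ℕ}
    (h1 : u[i]? = some (PSym.p b)) (h0 : prevOcc u i = none) :
    pencSym (PSym.p b :: u) (i+1) = Enc.fin (i+1) := by
  unfold pencSym
  rw [List.getElem?_cons_succ, h1, prevOcc_cons_zero h0 h1.symm]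
  simp

lemma pencSym_zero (c : PSym) (u : List PSym) :
    pencSym (c :: u) 0 = match c with | PSym.s a => Enc.s a | PSym.p _ => Enc.inf := by
  have h0 : prevOcc (c :: u) 0 = none := by rw [prevOcc_none]; omega
  unfold pencSym
  rw [h0]
  rcases c with a | a <;> simp

lemma getElem_ne_of_lt_indexOf {l : List PSym} {x : PSym} {j : ℕ}
    (hj : j < l.idxOf x) (hl : j < l.length) : l[j] ≠ x := by
  have := List.not_of_lt_findIdx (p := (· == x)) (xs := l) (by simpa [List.idxOf] using hj)
  simpa using this
lemma penc_cons_static (a : ℕ) (u : List PSym) :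
    penc (PSym.s a :: u) = Enc.s a :: penc u := by
  apply List.ext_getElem (by simp [penc_length])
  intro i h1 h2
  rcases i with _ | i
  · rw [penc_getElem _ _ (by simp)]
    simp [pencSym_zero]
  · rw [penc_getElem _ _ (by simpa [penc_length] using h2)]
    simp only [List.getElem_cons_succ]
    rw [penc_getElem _ _ (by simpa [penc_length, Nat.succ_lt_succ_iff] using h2)]
    exact pencSym_cons_static a u i

lemma penc_cons_p_not_mem {b : ℕ} {u : List PSym} (h : PSym.p b ∉ u) :
    penc (PSym.p b :: u) = Enc.inf :: penc u := by
  apply List.ext_getElem (by simp [penc_length])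
  intro i h1 h2
  rcases i with _ | i
  · rw [penc_getElem _ _ (by simp)]
    simp [pencSym_zero]
  · rw [penc_getElem _ _ (by simpa [penc_length] using h2)]
    have hi : i < u.length := by simpa [penc_length, Nat.succ_lt_succ_iff] using h2
    simp only [List.getElem_cons_succ]
    rw [penc_getElem _ _ hi]
    apply pencSym_cons_shift
    left
    intro hc
    exact h (List.mem_of_getElem? hc)

lemma penc_cons_p_mem {b : ℕ} {u : List PSym} (h : PSym.p b ∈ u) :
    penc (PSym.p b :: u) =
      Enc.inf :: (penc u).set (u.idxOf (PSym.p b)) (Enc.fin (u.idxOf (PSym.p b) + 1)) := by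
  set k := u.idxOf (PSym.p b) with hk
  have hkl : k < u.length := List.idxOf_lt_length_iff.2 h
  have hgk : u[k]? = some (PSym.p b) := by
    rw [List.getElem?_eq_getElem hkl, List.getElem_idxOf]
  have hprevk : prevOcc u k = none := by
    rw [prevOcc_none]
    intro j hj hne
    rw [hgk, List.getElem?_eq_getElem (by omega)] at hne
    exact getElem_ne_of_lt_indexOf hj (by omega) (by simpa using hne)
  apply List.ext_getElem (by simp [penc_length])
  intro i h1 h2
  rcases i with _ | i
  · rw [penc_getElem _ _ (by simp)]
    simp [pencSym_zero]
  · have hi : i < u.length := by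
      have := h2; simp [penc_length] at this; omega
    rw [penc_getElem _ _ (by simpa using Nat.succ_lt_succ hi)]
    simp only [List.getElem_cons_succ]
    rw [List.getElem_set]
    by_cases hik : i = k
    · subst hik
      simp only [if_pos rfl]
      exact pencSym_cons_first hgk hprevk
    · rw [if_neg (fun hh => hik hh.symm), penc_getElem _ _ hi]
      apply pencSym_cons_shift
      by_cases hib : u[i]? = some (PSym.p b)
      · right
        have hki : k < i := by
          rcases Nat.lt_or_ge i k with hlt | hge
          · exact absurd (by simpa [List.getElem?_eq_getElem hi] using hib)
              (getElem_ne_of_lt_indexOf hlt hi)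
          · omega
        intro hnone
        rw [prevOcc_none] at hnone
        exact hnone k hki (by rw [hgk, hib])
      · left
        simpa [hib] using fun hc => hib
lemma prevOcc_congr {u v : List PSym} {i : ℕ} (h : ∀ j ≤ i, u[j]? = v[j]?) :
    prevOcc u i = prevOcc v i := by
  unfold prevOcc
  congr 1
  apply List.filter_congr
  intro j hj
  rw [List.mem_range] at hj
  rw [h j (by omega), h i le_rfl]

lemma pencSym_congr {u v : List PSym} {i : ℕ} (h : ∀ j ≤ i, u[j]? = v[j]?) :
    pencSym u i = pencSym v i := by
  unfold pencSym
  rw [h i le_rfl, prevOcc_congr h]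

lemma pencSym_take {u : List PSym} {m i : ℕ} (h : i < m) :
    pencSym (u.take m) i = pencSym u i := by
  apply pencSym_congr
  intro j hj
  exact List.getElem?_take_of_lt (by omega)

lemma penc_take (u : List PSym) (m : ℕ) : penc (u.take m) = (penc u).take m := by
  apply List.ext_getElem (by simp [penc_length])
  intro i h1 h2
  have hi : i < m ∧ i < u.length := by
    simp [penc_length] at h1; omega
  rw [penc_getElem _ _ (by simpa [penc_length] using h1), List.getElem_take,
    penc_getElem _ _ hi.2, pencSym_take hi.1]

lemma pencSym_fin_le {u : List PSym} {i d : ℕ} (h : pencSym u i = Enc.fin d) : d ≤ i := by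
  unfold pencSym at h
  match hu : u[i]?, hp : prevOcc u i with
  | none, _ => rw [hu] at h; exact absurd h (by simp)
  | some (PSym.s a), _ => rw [hu] at h; exact absurd h (by simp)
  | some (PSym.p b), none => rw [hu, hp] at h; exact absurd h (by simp)
  | some (PSym.p b), some j =>
      rw [hu, hp] at h
      simp only [Enc.fin.injEq] at h
      omega

def pvals (w : List PSym) : List ℕ :=
  w.filterMap (fun s => match s with | PSym.p a => some a | PSym.s _ => none)

lemma distinctP_eq_card (w : List PSym) : distinctP w = (pvals w).toFinset.card := by
  rw [distinctP, List.card_toFinset]; rfl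

lemma mem_pvals {b : ℕ} {w : List PSym} : b ∈ pvals w ↔ PSym.p b ∈ w := by
  unfold pvals
  rw [List.mem_filterMap]
  constructor
  · rintro ⟨x, hx, hf⟩
    rcases x with a | a
    · simp at hf
    · simp only [Option.some.injEq] at hf
      rwa [← hf]
  · intro hb
    exact ⟨PSym.p b, hb, rfl⟩

lemma distinctP_sublist {u v : List PSym} (h : List.Sublist u v) : distinctP u ≤ distinctP v := by
  rw [distinctP_eq_card, distinctP_eq_card]
  apply Finset.card_le_card
  intro x hx
  rw [List.mem_toFinset] at *
  exact (h.filterMap _).subset hx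

lemma pencSym_append {u : List PSym} {i : ℕ} (h : i < u.length) (v : List PSym) :
    pencSym (u ++ v) i = pencSym u i := by
  apply pencSym_congr
  intro j hj
  exact List.getElem?_append_left (by omega)

lemma penc_append_last (u : List PSym) (x : PSym) :
    penc (u ++ [x]) = penc u ++ [pencSym (u ++ [x]) u.length] := by
  unfold penc
  rw [List.length_append, List.length_singleton, List.range_succ, List.map_append]
  congr 1
  apply List.map_congr_left
  intro i hi
  rw [List.mem_range] at hi
  exact pencSym_append hi [x]


lemma pencSym_last_inf_iff (u : List PSym) (x : PSym) :
    pencSym (u ++ [x]) u.length = Enc.inf ↔ (∃ b, x = PSym.p b ∧ x ∉ u) := by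
  have hg : (u ++ [x])[u.length]? = some x := by
    rw [List.getElem?_append_right le_rfl]
    simp
  unfold pencSym
  rw [hg]
  rcases x with a | a
  · simp
  · constructor
    · intro h
      refine ⟨a, rfl, fun hmem => ?_⟩
      match hp : prevOcc (u ++ [PSym.p a]) u.length with
      | some j => rw [hp] at h; exact absurd h (by simp)
      | none =>
          rw [prevOcc_none] at hp
          have hk := List.idxOf_lt_length_iff.2 hmem
          refine hp (u.idxOf (PSym.p a)) hk ?_
          rw [List.getElem?_append_left hk, hg, List.getElem?_eq_getElem hk,
            List.getElem_idxOf]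
    · rintro ⟨b, hb, hmem⟩
      injection hb with hab
      subst hab
      have hp : prevOcc (u ++ [PSym.p a]) u.length = none := by
        rw [prevOcc_none]
        intro j hj hne
        rw [hg, List.getElem?_append_left hj] at hne
        exact hmem (List.mem_of_getElem? hne)
      rw [hp]
lemma count_inf_penc (u : List PSym) : (penc u).count Enc.inf = distinctP u := by
  induction u using List.reverseRecOn with
  | nil => simp [penc, distinctP]
  | append_singleton u x ih =>
    rw [penc_append_last, List.count_append, ih, distinctP_eq_card, distinctP_eq_card]
    have hpv : pvals (u ++ [x]) = pvals u ++ pvals [x] := by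
      unfold pvals; rw [List.filterMap_append]
    rcases x with a | a
    · have : pvals [PSym.s a] = [] := rfl
      rw [hpv, this, List.append_nil]
      have hne : pencSym (u ++ [PSym.s a]) u.length ≠ Enc.inf := by
        rw [Ne, pencSym_last_inf_iff]
        rintro ⟨b, hb, -⟩
        exact PSym.noConfusion hb
      simp [List.count_singleton, hne]
    · have hpa : pvals [PSym.p a] = [a] := rfl
      rw [hpv, hpa]
      rw [List.toFinset_append]
      by_cases hmem : PSym.p a ∈ u
      · have hne : pencSym (u ++ [PSym.p a]) u.length ≠ Enc.inf := by
          rw [Ne, pencSym_last_inf_iff]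
          rintro ⟨b, hb, hnm⟩
          exact hnm hmem
        have : List.toFinset (pvals u) ∪ List.toFinset [a] = List.toFinset (pvals u) := by
          simp only [List.toFinset_cons, List.toFinset_nil, LawfulSingleton.insert_empty_eq]
          rw [Finset.union_comm]
          apply Finset.union_eq_right.2
          simp only [Finset.singleton_subset_iff, List.mem_toFinset]
          exact mem_pvals.2 hmem
        rw [this]
        simp [List.count_singleton, hne]
      · have hinf : pencSym (u ++ [PSym.p a]) u.length = Enc.inf := by
          rw [pencSym_last_inf_iff]
          exact ⟨a, rfl, hmem⟩
        have : List.toFinset (pvals u) ∪ List.toFinset [a] =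
            insert a (List.toFinset (pvals u)) := by
          simp only [List.toFinset_cons, List.toFinset_nil, LawfulSingleton.insert_empty_eq]
          rw [Finset.union_comm]; rfl
        rw [this, Finset.card_insert_of_notMem (by
          rw [List.mem_toFinset, mem_pvals]; exact hmem)]
        simp [hinf]
lemma getElem?_indexOf' {u : List PSym} {b : ℕ} (h : PSym.p b ∈ u) :
    u[u.idxOf (PSym.p b)]? = some (PSym.p b) := by
  have hkl := List.idxOf_lt_length_iff.2 h
  rw [List.getElem?_eq_getElem hkl, List.getElem_idxOf]

lemma prevOcc_indexOf {u : List PSym} {b : ℕ} (h : PSym.p b ∈ u) :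
    prevOcc u (u.idxOf (PSym.p b)) = none := by
  have hkl := List.idxOf_lt_length_iff.2 h
  rw [prevOcc_none]
  intro j hj hne
  rw [getElem?_indexOf' h, List.getElem?_eq_getElem (by omega)] at hne
  exact getElem_ne_of_lt_indexOf hj (by omega) (by simpa using hne)

lemma fce_cons_static (a : ℕ) (rest : List PSym) : fce (PSym.s a :: rest) = Enc.s a := rfl

lemma fce_cons_p (a : ℕ) (rest : List PSym) :
    fce (PSym.p a :: rest) = Enc.fin (fceRank (PSym.p a :: rest)) := rfl

lemma fceRank_not_mem {b : ℕ} {rest : List PSym} (h : PSym.p b ∉ rest) :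
    fceRank (PSym.p b :: rest) = distinctP (PSym.p b :: rest) := by
  rw [fceRank, List.idxOf_of_notMem h]
  congr 1
  rw [min_eq_left (by simp)]
  exact List.take_of_length_le (by simp)

lemma fceRank_mem {b : ℕ} {rest : List PSym} (h : PSym.p b ∈ rest) :
    fceRank (PSym.p b :: rest) =
      distinctP (PSym.p b :: rest.take (rest.idxOf (PSym.p b) + 1)) := by
  have hkl := List.idxOf_lt_length_iff.2 h
  rw [fceRank]
  congr 1
  rw [min_eq_right (by simp; omega)]
  rw [show 2 + rest.idxOf (PSym.p b) = (rest.idxOf (PSym.p b) + 1) + 1 by omega,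
    List.take_succ_cons]

lemma pvals_cons_p (b : ℕ) (u : List PSym) : pvals (PSym.p b :: u) = b :: pvals u := rfl

lemma distinctP_cons_p_not_mem {b : ℕ} {u : List PSym} (h : PSym.p b ∉ u) :
    distinctP (PSym.p b :: u) = distinctP u + 1 := by
  rw [distinctP_eq_card, distinctP_eq_card, pvals_cons_p, List.toFinset_cons,
    Finset.card_insert_of_notMem (by rw [List.mem_toFinset, mem_pvals]; exact h)]

lemma distinctP_cons_p_mem {b : ℕ} {u : List PSym} (h : PSym.p b ∈ u) :
    distinctP (PSym.p b :: u) = distinctP u := by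
  rw [distinctP_eq_card, distinctP_eq_card, pvals_cons_p, List.toFinset_cons,
    Finset.insert_eq_self.2 (by rw [List.mem_toFinset, mem_pvals]; exact h)]

lemma distinctP_take_of_prefix {w u : List PSym} (h : penc w <+: penc u) :
    distinctP (u.take w.length) = distinctP w := by
  rw [← count_inf_penc, ← count_inf_penc, penc_take]
  rw [List.prefix_iff_eq_take] at h
  rw [penc_length] at h
  rw [← h]

lemma length_le_of_prefix {w u : List PSym} (h : penc w <+: penc u) : w.length ≤ u.length := by
  have := h.length_le
  rwa [penc_length, penc_length] at this

lemma core_lemma (a : ℕ) (w u : List PSym) (hnocc : PSym.p a ∉ w) (c : PSym) :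
    (penc (PSym.p a :: w) <+: penc (c :: u) ↔
      (penc w <+: penc u ∧ Enc.fin (distinctP w) < fce (c :: u))) := by
  rw [penc_cons_p_not_mem hnocc]
  rcases c with b | b
  · rw [penc_cons_static, fce_cons_static, List.cons_prefix_cons]
    constructor
    · rintro ⟨h, -⟩; exact absurd h (by simp)
    · rintro ⟨-, h⟩; exact absurd h (not_fin_lt_s _ _)
  · rw [fce_cons_p, fin_lt_fin]
    by_cases hbm : PSym.p b ∈ u
    · set k := u.idxOf (PSym.p b) with hkdef
      have hkl : k < u.length := List.idxOf_lt_length_iff.2 hbm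
      rw [penc_cons_p_mem hbm, List.cons_prefix_cons, fceRank_mem hbm, ← hkdef]
      simp only [true_and]
      by_cases hwk : w.length ≤ k
      · have hset : ((penc u).set k (Enc.fin (k+1))).take w.length = (penc u).take w.length := by
          rw [List.take_set, List.set_eq_of_length_le (by simp [penc_length]; omega)]
        have hiff : penc w <+: (penc u).set k (Enc.fin (k+1)) ↔ penc w <+: penc u := by
          rw [List.prefix_iff_eq_take, List.prefix_iff_eq_take, penc_length, hset]
        rw [hiff]
        constructor
        · intro h
          refine ⟨h, ?_⟩
          -- distinctP w < distinctP (p b :: u.take (k+1))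
          have he : distinctP (u.take w.length) = distinctP w := distinctP_take_of_prefix h
          have hbnm : PSym.p b ∉ u.take w.length := by
            intro hmem
            obtain ⟨j, hj, hje⟩ := List.getElem_of_mem hmem
            rw [List.getElem_take] at hje
            have hjw : j < w.length := by simp at hj; omega
            exact getElem_ne_of_lt_indexOf (by omega) (by simp at hj; omega) hje
          have hsub : List.Sublist (PSym.p b :: u.take w.length) (PSym.p b :: u.take (k+1)) := by
            apply List.Sublist.cons₂
            rw [show w.length = min w.length (k+1) by omega, ← List.take_take]
            exact List.take_sublist _ _
          have := distinctP_sublist hsub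
          rw [distinctP_cons_p_not_mem hbnm, he] at this
          omega
        · rintro ⟨h, -⟩; exact h
      · push_neg at hwk
        constructor
        · intro h
          exfalso
          rw [List.prefix_iff_eq_take] at h
          have hk : (penc w)[k]? = some (Enc.fin (k+1)) := by
            conv_lhs => rw [h]
            rw [List.getElem?_take_of_lt (by rw [penc_length]; omega),
              List.getElem?_set_self (by rw [penc_length]; omega)]
          rw [penc_getElem? _ _ (by omega), Option.some_inj] at hk
          have := pencSym_fin_le hk
          omega
        · rintro ⟨h, hlt⟩
          exfalso
          have hbmem : PSym.p b ∈ u.take (k+1) := by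
            have : (u.take (k+1))[k]'(by simp; omega) = PSym.p b := by
              rw [List.getElem_take]; exact List.getElem_idxOf hkl
            exact this ▸ List.getElem_mem _
          rw [distinctP_cons_p_mem hbmem] at hlt
          -- distinctP (u.take (k+1)) ≤ distinctP w
          have htk : (penc u).take (k+1) = (penc w).take (k+1) := by
            rw [List.prefix_iff_eq_take, penc_length] at h
            rw [h, List.take_take, min_eq_left (by omega)]
          have : distinctP (u.take (k+1)) ≤ distinctP w := by
            rw [← count_inf_penc, ← count_inf_penc, penc_take, htk]
            exact ((penc w).take_sublist (k+1)).count_le _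
          omega
    · rw [penc_cons_p_not_mem hbm, List.cons_prefix_cons, fceRank_not_mem hbm,
        distinctP_cons_p_not_mem hbm]
      simp only [true_and]
      constructor
      · intro h
        refine ⟨h, ?_⟩
        have : distinctP w ≤ distinctP u := by
          rw [← distinctP_take_of_prefix h]
          exact distinctP_sublist (List.take_sublist _ _)
        omega
      · rintro ⟨h, -⟩; exact h
end Scratch

open Scratch in
theorem stmt19 (T : List PSym) (n : ℕ) (hn : n = T.length)
    -- `$` (modelled as `PSym.s 0`, the smallest symbol) is the end-marker of `T`
    (hend : T.getLast? = some (PSym.s 0))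
    (huniq : ∀ i, i + 1 < n → T[i]? ≠ some (PSym.s 0))
    -- `Rinv i` is the (0-based) starting position of the lexicographically
    -- (i+1)-st p-encoded suffix of `T`
    (Rinv : ℕ → ℕ) (hdom : ∀ i < n, Rinv i < n)
    (hsorted : ∀ i j, i < j → j < n →
      lexLt (penc (T.drop (Rinv i))) (penc (T.drop (Rinv j))))
    -- `R` is the rank function, the inverse of `Rinv`
    (R : ℕ → ℕ) (hRdom : ∀ p < n, R p < n)
    (hRinv : ∀ i < n, R (Rinv i) = i) (hR : ∀ p < n, Rinv (R p) = p)
    -- the pBWT array `L`:  L i = fce (T[R⁻¹(i)−1..])  (with T[0..] := $)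
    (L : ℕ → Enc)
    (hL : ∀ i < n, L i = fce (if Rinv i = 0 then [PSym.s 0] else T.drop (Rinv i - 1)))
    -- the LF-mapping
    (LF : ℕ → ℕ)
    (hLF : ∀ i < n, LF i = if Rinv i = 0 then R (n - 1) else R (Rinv i - 1))
    -- a p-symbol c not occurring in w; e = |w|_p
    (w : List PSym) (a : ℕ) (hnocc : PSym.p a ∉ w)
    (e : ℕ) (he : e = distinctP w)
    -- [l..r] is the w-interval: the maximal interval of ranks whose
    -- p-encoded suffixes are prefixed by ⟨w⟩
    (l r : ℕ) (hr : r < n)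
    (hwint : ∀ q < n, (l ≤ q ∧ q ≤ r ↔ penc w <+: penc (T.drop (Rinv q))))
    -- [l'..r'] is the cw-interval
    (l' r' : ℕ) (hr' : r' < n)
    (hcwint : ∀ q < n,
      (l' ≤ q ∧ q ≤ r' ↔ penc (PSym.p a :: w) <+: penc (T.drop (Rinv q))))
 :
    (∀ p < n, (l' ≤ LF p ∧ LF p ≤ r') ↔ (l ≤ p ∧ p ≤ r ∧ Enc.fin e < L p)) ∧
    -- in particular, the width of the cw-interval equals the number of
    -- positions p in the w-interval with L p > e
    ((Finset.range n).filter (fun q => l' ≤ q ∧ q ≤ r')).card =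
      ((Finset.range n).filter
        (fun q => l ≤ q ∧ q ≤ r ∧ Enc.fin e < L q)).card := by
  subst he
  have hn0 : 0 < n := by omega
  have hTne : n - 1 < T.length := by omega
  have hlast? : T[n-1]? = some (PSym.s 0) := by
    rw [List.getLast?_eq_getElem?] at hend
    rwa [show T.length - 1 = n - 1 by omega] at hend
  have hlastE : T[n-1]'hTne = PSym.s 0 := by
    rw [List.getElem?_eq_getElem hTne] at hlast?
    exact Option.some_inj.1 hlast?
  have hdropLast : T.drop (n-1) = [PSym.s 0] := by
    rw [List.drop_eq_getElem_cons hTne, hlastE]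
    have : T.drop (n - 1 + 1) = [] := List.drop_eq_nil_of_le (by omega)
    rw [this]
  have main : ∀ p < n, ((l' ≤ LF p ∧ LF p ≤ r') ↔
      (l ≤ p ∧ p ≤ r ∧ Enc.fin (distinctP w) < L p)) := by
    intro p hp
    have hRp : Rinv p < n := hdom p hp
    by_cases h0 : Rinv p = 0
    · rw [hLF p hp, if_pos h0, hL p hp, if_pos h0]
      have hq : R (n-1) < n := hRdom (n-1) (by omega)
      rw [hcwint (R (n-1)) hq, hR (n-1) (by omega), hdropLast]
      rw [penc_cons_p_not_mem hnocc]
      have hps : penc [PSym.s 0] = [Enc.s 0] := rfl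
      rw [hps]
      constructor
      · intro hpre
        rw [List.cons_prefix_cons] at hpre
        exact absurd hpre.1 (by simp)
      · rintro ⟨-, -, hlt⟩
        exact absurd hlt (not_fin_lt_s _ _)
    · obtain ⟨j, hj⟩ : ∃ j, Rinv p = j + 1 := ⟨Rinv p - 1, by omega⟩
      have hjn : j < n := by omega
      have hjT : j < T.length := by omega
      rw [hLF p hp, if_neg h0, hL p hp, if_neg h0, hj]
      simp only [Nat.add_sub_cancel]
      have hq : R j < n := hRdom j hjn
      rw [hcwint (R j) hq, hR j hjn]
      have hTdrop : T.drop j = T[j]'hjT :: T.drop (j+1) := List.drop_eq_getElem_cons hjT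
      rw [hTdrop, core_lemma _ _ _ hnocc]
      have hw' := hwint p hp
      rw [hj] at hw'
      rw [← hw']
      tauto
  refine ⟨main, ?_⟩
  symm
  have hLFlt : ∀ p < n, LF p < n := by
    intro p hp
    rw [hLF p hp]
    split
    · exact hRdom (n-1) (by omega)
    · exact hRdom _ (by have := hdom p hp; omega)
  set g : ℕ → ℕ := fun q => if Rinv q + 1 < n then R (Rinv q + 1) else R 0 with hg
  have hglt : ∀ q < n, g q < n := by
    intro q hq
    rw [hg]
    dsimp only
    split
    · exact hRdom _ (by assumption)
    · exact hRdom 0 hn0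
  have hLFg : ∀ q < n, LF (g q) = q := by
    intro q hq
    have hRq : Rinv q < n := hdom q hq
    by_cases hcase : Rinv q + 1 < n
    · have hgq : g q = R (Rinv q + 1) := by rw [hg]; simp [hcase]
      have hglt' : g q < n := hglt q hq
      have hRg : Rinv (g q) = Rinv q + 1 := by rw [hgq]; exact hR _ hcase
      rw [hLF _ hglt', hRg]
      simp only [Nat.add_sub_cancel, if_neg (Nat.succ_ne_zero _)]
      exact hRinv q hq
    · have hn1 : Rinv q = n - 1 := by omega
      have hgq : g q = R 0 := by rw [hg]; simp [hcase]
      have hglt' : g q < n := hglt q hq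
      have hRg : Rinv (g q) = 0 := by rw [hgq]; exact hR 0 hn0
      rw [hLF _ hglt', if_pos hRg, ← hn1]
      exact hRinv q hq
  have hgLF : ∀ p < n, g (LF p) = p := by
    intro p hp
    have hRp : Rinv p < n := hdom p hp
    by_cases h0 : Rinv p = 0
    · have hlf : LF p = R (n-1) := by rw [hLF p hp, if_pos h0]
      have hRlf : Rinv (LF p) = n - 1 := by rw [hlf]; exact hR _ (by omega)
      rw [hg]
      dsimp only
      rw [hRlf, if_neg (by omega), ← h0]
      exact hRinv p hp
    · have hlf : LF p = R (Rinv p - 1) := by rw [hLF p hp, if_neg h0]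
      have hRlf : Rinv (LF p) = Rinv p - 1 := by rw [hlf]; exact hR _ (by omega)
      rw [hg]
      dsimp only
      rw [hRlf, if_pos (by omega), show Rinv p - 1 + 1 = Rinv p by omega]
      exact hRinv p hp
  apply Finset.card_bij' (fun p _ => LF p) (fun q _ => g q)
  · intro p hps
    rw [Finset.mem_filter, Finset.mem_range] at hps ⊢
    exact ⟨hLFlt p hps.1, ((main p hps.1).2 hps.2).1, ((main p hps.1).2 hps.2).2⟩
  · intro q hqs
    rw [Finset.mem_filter, Finset.mem_range] at hqs ⊢
    have hq : q < n := hqs.1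
    have hgq : g q < n := hglt q hq
    refine ⟨hgq, ?_⟩
    have := (main (g q) hgq).1 (by rw [hLFg q hq]; exact hqs.2)
    exact this
  · intro p hps
    rw [Finset.mem_filter, Finset.mem_range] at hps
    exact hgLF p hps.1
  · intro q hqs
    rw [Finset.mem_filter, Finset.mem_range] at hqs
    exact hLFg q hqs.1
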